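/- arXiv:2601.01771 — 3 statements merged into one kernel-verified Lean document; each statement's English description precedes it below -/
import Mathlib

section
/- The subgroup of GL(3,ℝ) generated by the matrices τ₁ and δ is isomorphic to the alternating group A₄ (the group of even permutations of a four-element set). -/
open Matrix

/-- The matrix representing the automorphism δ of `V_{L₂}`. -/
noncomputable def δ : GL (Fin 3) ℝ :=
  Matrix.GeneralLinearGroup.mkOfDetNeZero !![0,1,0; 0,0,-1; -1,0,0]
    (by simp [Matrix.det_fin_three])

/-- The matrix representing the automorphism τ₁ of `V_{L₂}`. -/
noncomputable def τ₁ : GL (Fin 3) ℝ :=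
  Matrix.GeneralLinearGroup.mkOfDetNeZero !![1,0,0; 0,-1,0; 0,0,-1]
    (by simp [Matrix.det_fin_three])

/-- The matrix representing the automorphism τ₂ of `V_{L₂}`. -/
noncomputable def τ₂ : GL (Fin 3) ℝ :=
  Matrix.GeneralLinearGroup.mkOfDetNeZero !![-1,0,0; 0,1,0; 0,0,-1]
    (by simp [Matrix.det_fin_three])

/-- The matrix representing the automorphism ρ of `V_{L₂}`. -/
noncomputable def ρ : GL (Fin 3) ℝ :=
  Matrix.GeneralLinearGroup.mkOfDetNeZero !![-1,0,0; 0,0,1; 0,1,0]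
    (by simp [Matrix.det_fin_three])

def Dr : Matrix (Fin 3) (Fin 4) ℝ := !![1,1,-1,-1; 1,-1,1,-1; 1,-1,-1,1]
def Dt : Matrix (Fin 4) (Fin 3) ℝ := !![1,1,1; 1,-1,-1; -1,1,-1; -1,-1,1]
def Pm (σ : Equiv.Perm (Fin 4)) : Matrix (Fin 4) (Fin 4) ℝ :=
  Matrix.of fun i k => if σ k = i then 1 else 0
def Jm : Matrix (Fin 4) (Fin 4) ℝ := Matrix.of fun _ _ => 1

lemma Pm_one : Pm 1 = 1 := by
  ext i k; simp [Pm, Matrix.one_apply, eq_comm]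

lemma Pm_mul (σ τ : Equiv.Perm (Fin 4)) : Pm σ * Pm τ = Pm (σ * τ) := by
  ext i k
  simp [Pm, Matrix.mul_apply, Finset.sum_ite_eq, ite_and]
  congr

lemma Pm_J (σ : Equiv.Perm (Fin 4)) : Pm σ * Jm = Jm := by
  ext i k
  simp only [Pm, Jm, Matrix.mul_apply, Matrix.of_apply, mul_one]
  have : ∀ x, (σ x = i) = (x = σ.symm i) := by
    intro x; simp [Equiv.eq_symm_apply, eq_comm]
  simp [this]

lemma Dr_J : Dr * Jm = 0 := by
  ext j k
  fin_cases j <;> norm_num [Dr, Jm, Matrix.mul_apply, Fin.sum_univ_succ, Matrix.vecHead, Matrix.vecTail, Fin.ext_iff]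

lemma DtD : Dt * Dr = (4:ℝ) • 1 - Jm := by
  ext i k
  fin_cases i <;> fin_cases k <;>
    norm_num [Dr, Dt, Jm, Matrix.mul_apply, Fin.sum_univ_succ, Matrix.one_apply, Matrix.vecHead, Matrix.vecTail, Fin.ext_iff]

lemma DDt : Dr * Dt = (4:ℝ) • 1 := by
  ext j k
  fin_cases j <;> fin_cases k <;>
    norm_num [Dr, Dt, Matrix.mul_apply, Fin.sum_univ_succ, Matrix.one_apply, Matrix.vecHead, Matrix.vecTail, Fin.ext_iff]


lemma J_Pm (σ : Equiv.Perm (Fin 4)) : Jm * Pm σ = Jm := by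
  ext i k
  simp only [Pm, Jm, Matrix.mul_apply, Matrix.of_apply, one_mul]
  simp

noncomputable def Rm (σ : Equiv.Perm (Fin 4)) : Matrix (Fin 3) (Fin 3) ℝ :=
  (4:ℝ)⁻¹ • (Dr * Pm σ * Dt)

lemma Rm_one : Rm 1 = 1 := by
  rw [Rm, Pm_one, Matrix.mul_one, DDt, smul_smul]; norm_num

lemma key_assoc (σ τ : Equiv.Perm (Fin 4)) :
    Dr * Pm σ * Dt * (Dr * Pm τ * Dt) = (4:ℝ) • (Dr * Pm (σ * τ) * Dt) := by
  have h0 : Dr * Jm * Dt = 0 := by rw [Dr_J, Matrix.zero_mul]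
  calc Dr * Pm σ * Dt * (Dr * Pm τ * Dt)
      = Dr * Pm σ * (Dt * Dr) * (Pm τ * Dt) := by
        simp only [Matrix.mul_assoc]
    _ = Dr * Pm σ * ((4:ℝ) • 1 - Jm) * (Pm τ * Dt) := by rw [DtD]
    _ = (4:ℝ) • (Dr * Pm σ * (Pm τ * Dt)) - Dr * (Pm σ * Jm) * (Pm τ * Dt) := by
        rw [Matrix.mul_sub, Matrix.sub_mul, Matrix.mul_smul, Matrix.mul_one, Matrix.smul_mul,
          Matrix.mul_assoc Dr (Pm σ) Jm]
    _ = (4:ℝ) • (Dr * Pm (σ * τ) * Dt) := by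
        rw [Pm_J, Matrix.mul_assoc Dr (Pm σ) (Pm τ * Dt), ← Matrix.mul_assoc (Pm σ) (Pm τ) Dt,
          Pm_mul, ← Matrix.mul_assoc Dr (Pm (σ * τ)) Dt]
        rw [Matrix.mul_assoc Dr Jm (Pm τ * Dt), ← Matrix.mul_assoc Jm (Pm τ) Dt, J_Pm,
          ← Matrix.mul_assoc Dr Jm Dt, h0, sub_zero]

lemma Rm_mul (σ τ : Equiv.Perm (Fin 4)) : Rm σ * Rm τ = Rm (σ * τ) := by
  rw [Rm, Rm, Rm, Matrix.smul_mul, Matrix.mul_smul, smul_smul, key_assoc, smul_smul]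
  norm_num

lemma Rm_D (σ : Equiv.Perm (Fin 4)) : Rm σ * Dr = Dr * Pm σ := by
  have h2 : Dr * (Pm σ * Jm) = 0 := by rw [Pm_J, Dr_J]
  rw [Rm, Matrix.smul_mul, Matrix.mul_assoc, DtD, Matrix.mul_sub, Matrix.mul_smul,
    Matrix.mul_one, Matrix.mul_assoc Dr (Pm σ) Jm, h2, sub_zero, smul_smul]
  norm_num

noncomputable def RmHom : Equiv.Perm (Fin 4) →* Matrix (Fin 3) (Fin 3) ℝ where
  toFun := Rm
  map_one' := Rm_one
  map_mul' := fun σ τ => (Rm_mul σ τ).symm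

noncomputable def rGL : Equiv.Perm (Fin 4) →* GL (Fin 3) ℝ := RmHom.toHomUnits

def aP : Equiv.Perm (Fin 4) := Equiv.swap 0 1 * Equiv.swap 2 3
def bP : Equiv.Perm (Fin 4) := Equiv.swap 0 2 * Equiv.swap 0 1

lemma Pm_aP : Pm aP = !![0,1,0,0; 1,0,0,0; 0,0,0,1; 0,0,1,0] := by
  have e0 : aP 0 = 1 := by decide
  have e1 : aP 1 = 0 := by decide
  have e2 : aP 2 = 3 := by decide
  have e3 : aP 3 = 2 := by decide
  ext i k
  fin_cases i <;> fin_cases k <;>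
    norm_num [Pm, e0, e1, e2, e3, Matrix.vecHead, Matrix.vecTail] <;> decide

lemma Pm_bP : Pm bP = !![0,0,1,0; 1,0,0,0; 0,1,0,0; 0,0,0,1] := by
  have e0 : bP 0 = 1 := by decide
  have e1 : bP 1 = 2 := by decide
  have e2 : bP 2 = 0 := by decide
  have e3 : bP 3 = 3 := by decide
  ext i k
  fin_cases i <;> fin_cases k <;>
    norm_num [Pm, e0, e1, e2, e3, Matrix.vecHead, Matrix.vecTail] <;> decide

lemma Rm_aP : Rm aP = !![1,0,0; 0,-1,0; 0,0,-1] := by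
  rw [Rm, Pm_aP]
  ext j k
  fin_cases j <;> fin_cases k <;>
    simp [Dr, Dt, Matrix.mul_apply, Fin.sum_univ_succ] <;> norm_num

lemma Rm_bP : Rm bP = !![0,1,0; 0,0,-1; -1,0,0] := by
  rw [Rm, Pm_bP]
  ext j k
  fin_cases j <;> fin_cases k <;>
    simp [Dr, Dt, Matrix.mul_apply, Fin.sum_univ_succ] <;> norm_num

lemma Rm_inj {σ : Equiv.Perm (Fin 4)} (h : Rm σ = 1) : σ = 1 := by
  have hD : Dr * Pm σ = Dr := by rw [← Rm_D σ, h, Matrix.one_mul]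
  have hcol : ∀ m : Fin 4, ∀ j : Fin 3, Dr j (σ m) = Dr j m := by
    intro m j
    have := congrFun (congrFun hD j) m
    simp only [Matrix.mul_apply, Pm, Matrix.of_apply, mul_ite, mul_one, mul_zero] at this
    rw [Finset.sum_ite_eq] at this
    simpa using this
  ext m
  have h0 := hcol m 0
  have h1 := hcol m 1
  have h2 := hcol m 2
  revert h0 h1 h2
  fin_cases m <;> generalize σ _ = x <;> fin_cases x <;>
    norm_num [Dr, Matrix.vecHead, Matrix.vecTail, Fin.ext_iff]

def Lw : List (Equiv.Perm (Fin 4)) :=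
  [1, aP, bP, bP*aP, aP*bP, bP*bP, aP*bP*aP, bP*bP*aP, bP*aP*bP, aP*bP*bP,
   bP*bP*aP*bP, bP*aP*bP*bP]

set_option maxHeartbeats 1000000 in
lemma even_mem_Lw : ∀ s : Equiv.Perm (Fin 4), Equiv.Perm.sign s = 1 → s ∈ Lw := by decide

lemma aP_mem_alt : aP ∈ alternatingGroup (Fin 4) := by
  rw [Equiv.Perm.mem_alternatingGroup]; decide

lemma bP_mem_alt : bP ∈ alternatingGroup (Fin 4) := by
  rw [Equiv.Perm.mem_alternatingGroup]; decide

lemma A4_le_closure : alternatingGroup (Fin 4) ≤ Subgroup.closure {aP, bP} := by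
  intro s hs
  have ha : aP ∈ Subgroup.closure {aP, bP} :=
    Subgroup.subset_closure (Set.mem_insert _ _)
  have hb : bP ∈ Subgroup.closure {aP, bP} :=
    Subgroup.subset_closure (Set.mem_insert_of_mem _ rfl)
  have hmem := even_mem_Lw s (Equiv.Perm.mem_alternatingGroup.mp hs)
  simp only [Lw, List.mem_cons, List.not_mem_nil, or_false] at hmem
  rcases hmem with rfl|rfl|rfl|rfl|rfl|rfl|rfl|rfl|rfl|rfl|rfl|rfl
  · exact one_mem _
  · exact ha
  · exact hb
  · exact mul_mem hb ha
  · exact mul_mem ha hb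
  · exact mul_mem hb hb
  · exact mul_mem (mul_mem ha hb) ha
  · exact mul_mem (mul_mem hb hb) ha
  · exact mul_mem (mul_mem hb ha) hb
  · exact mul_mem (mul_mem ha hb) hb
  · exact mul_mem (mul_mem (mul_mem hb hb) ha) hb
  · exact mul_mem (mul_mem (mul_mem hb ha) hb) hb

lemma rGL_aP : rGL aP = τ₁ := by
  apply Units.ext
  show Rm aP = _
  rw [Rm_aP]; rfl

lemma rGL_bP : rGL bP = δ := by
  apply Units.ext
  show Rm bP = _
  rw [Rm_bP]; rfl

noncomputable def rA4 : ↥(alternatingGroup (Fin 4)) →* GL (Fin 3) ℝ :=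
  rGL.comp (alternatingGroup (Fin 4)).subtype

lemma rA4_inj : Function.Injective rA4 := by
  rw [injective_iff_map_eq_one]
  intro σ hσ
  have : Rm σ.1 = 1 := congrArg Units.val hσ
  exact Subtype.ext (Rm_inj this)

lemma rA4_range : rA4.range = Subgroup.closure {τ₁, δ} := by
  apply le_antisymm
  · rintro x ⟨σ, rfl⟩
    have h : σ.1 ∈ Subgroup.closure {aP, bP} := A4_le_closure σ.2
    have h2 : rGL σ.1 ∈ (Subgroup.closure {aP, bP}).map rGL := ⟨σ.1, h, rfl⟩
    rw [MonoidHom.map_closure] at h2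
    have himg : rGL '' {aP, bP} = {τ₁, δ} := by
      rw [Set.image_pair, rGL_aP, rGL_bP]
    rw [himg] at h2
    exact h2
  · rw [Subgroup.closure_le]
    rintro x (rfl|rfl)
    · exact ⟨⟨aP, aP_mem_alt⟩, rGL_aP⟩
    · exact ⟨⟨bP, bP_mem_alt⟩, rGL_bP⟩


/-- The subgroup of GL(3,ℝ) generated by τ₁ and δ is isomorphic to the
alternating group A₄. -/
theorem subgroup_closure_tau1_delta_iso_A4 :
    Nonempty ((Subgroup.closure {τ₁, δ} : Subgroup (GL (Fin 3) ℝ)) ≃* alternatingGroup (Fin 4)) := by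
  exact ⟨(MulEquiv.subgroupCongr rA4_range).symm.trans (MonoidHom.ofInjective rA4_inj).symm⟩
end

section
/- The subgroup of GL(3,ℝ) generated by the matrices τ₂ and δ is isomorphic to the alternating group A₄ (the group of even permutations of a four-element set). -/
open Matrix

namespace A4aux

/-- Directions of the four diagonals of the cube. -/
def u : Fin 4 → Fin 3 → ℝ := ![![1,1,1], ![1,-1,-1], ![-1,1,-1], ![-1,-1,1]]

lemma udot (i j : Fin 4) : ∑ c : Fin 3, u i c * u j c = if i = j then 3 else -1 := by
  fin_cases i <;> fin_cases j <;> simp [u, Fin.sum_univ_three, Matrix.vecHead, Matrix.vecTail] <;> norm_num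

lemma usum (a : Fin 3) : ∑ i : Fin 4, u i a = 0 := by
  fin_cases a <;> simp [u, Fin.sum_univ_four, Matrix.vecHead, Matrix.vecTail] <;> norm_num

lemma u_inj : Function.Injective u := by
  intro i j h
  fin_cases i <;> fin_cases j <;> first
    | rfl
    | (have := congrFun h 0; norm_num [u, Matrix.vecHead, Matrix.vecTail] at this; done)
    | (have := congrFun h 1; norm_num [u, Matrix.vecHead, Matrix.vecTail] at this; done)
    | (have := congrFun h 2; norm_num [u, Matrix.vecHead, Matrix.vecTail] at this; done)

noncomputable def M (σ : Equiv.Perm (Fin 4)) : Matrix (Fin 3) (Fin 3) ℝ :=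
  Matrix.of fun a b => (∑ i : Fin 4, u (σ i) a * u i b) / 4

lemma M_one : M 1 = 1 := by
  ext a b
  simp only [M, Matrix.of_apply, Equiv.Perm.one_apply]
  fin_cases a <;> fin_cases b <;>
    simp [u, Fin.sum_univ_four, Matrix.one_apply, Matrix.vecHead, Matrix.vecTail] <;> norm_num

lemma sum_u_perm (σ : Equiv.Perm (Fin 4)) (a : Fin 3) :
    ∑ i : Fin 4, u (σ i) a = 0 := by
  rw [Equiv.sum_comp σ (fun i => u i a), usum]

lemma M_mul (σ τ : Equiv.Perm (Fin 4)) : M (σ * τ) = M σ * M τ := by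
  ext a b
  simp only [M, Matrix.mul_apply, Matrix.of_apply, Equiv.Perm.mul_apply]
  have step1 : ∀ c : Fin 3,
      (∑ i : Fin 4, u (σ i) a * u i c) / 4 * ((∑ j : Fin 4, u (τ j) c * u j b) / 4)
      = (∑ i : Fin 4, ∑ j : Fin 4, (u (σ i) a * u j b) * (u i c * u (τ j) c)) / 16 := by
    intro c
    rw [div_mul_div_comm, Finset.sum_mul_sum]
    norm_num
    congr 1
    exact funext fun i => Finset.sum_congr rfl fun j _ => by ring
  rw [Finset.sum_congr rfl fun c _ => step1 c, ← Finset.sum_div, Finset.sum_comm]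
  have step2 : ∀ i : Fin 4,
      ∑ c : Fin 3, ∑ j : Fin 4, (u (σ i) a * u j b) * (u i c * u (τ j) c)
      = ∑ j : Fin 4, (u (σ i) a * u j b) * (if i = τ j then (3:ℝ) else -1) := by
    intro i
    rw [Finset.sum_comm]
    refine Finset.sum_congr rfl fun j _ => ?_
    rw [← Finset.mul_sum, udot]
  rw [Finset.sum_congr rfl fun i _ => step2 i, Finset.sum_comm]
  have step3 : ∀ j : Fin 4,
      ∑ i : Fin 4, (u (σ i) a * u j b) * (if i = τ j then (3:ℝ) else -1)
      = 4 * (u (σ (τ j)) a * u j b) := by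
    intro j
    have hsplit : ∀ i : Fin 4, (u (σ i) a * u j b) * (if i = τ j then (3:ℝ) else -1)
        = (if i = τ j then 4 * (u (σ i) a * u j b) else 0) - u (σ i) a * u j b := by
      intro i; split <;> ring
    simp only [hsplit]
    rw [Finset.sum_sub_distrib, Finset.sum_ite_eq', if_pos (Finset.mem_univ _),
      ← Finset.sum_mul, sum_u_perm, zero_mul, sub_zero]
  rw [Finset.sum_congr rfl fun j _ => step3 j, Finset.sum_div, Finset.sum_div]
  refine Finset.sum_congr rfl fun j _ => by ring

/-- The representation `A₄ → GL(3,ℝ)` as a homomorphism on all of `S₄`. -/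
noncomputable def φ : Equiv.Perm (Fin 4) →* GL (Fin 3) ℝ where
  toFun σ := ⟨M σ, M σ⁻¹,
    by rw [← M_mul, mul_inv_cancel, M_one], by rw [← M_mul, inv_mul_cancel, M_one]⟩
  map_one' := Units.ext M_one
  map_mul' σ τ := Units.ext (M_mul σ τ)

lemma M_apply_u (σ : Equiv.Perm (Fin 4)) (j : Fin 4) (a : Fin 3) :
    ∑ b : Fin 3, M σ a b * u j b = u (σ j) a := by
  simp only [M, Matrix.of_apply]
  have : ∀ b : Fin 3, (∑ i : Fin 4, u (σ i) a * u i b) / 4 * u j b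
      = (∑ i : Fin 4, (u (σ i) a) * (u i b * u j b)) / 4 := by
    intro b
    rw [div_mul_eq_mul_div, Finset.sum_mul]
    refine congrArg (· / 4) (Finset.sum_congr rfl fun i _ => by ring)
  rw [Finset.sum_congr rfl fun b _ => this b, ← Finset.sum_div, Finset.sum_comm]
  have : ∀ i : Fin 4, ∑ b : Fin 3, u (σ i) a * (u i b * u j b)
      = (if i = j then 4 * u (σ i) a else 0) - u (σ i) a := by
    intro i
    rw [← Finset.mul_sum, udot]
    split <;> ring
  rw [Finset.sum_congr rfl fun i _ => this i, Finset.sum_sub_distrib,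
    Finset.sum_ite_eq', if_pos (Finset.mem_univ _), sum_u_perm, sub_zero]
  ring

lemma φ_inj : Function.Injective φ := by
  refine (injective_iff_map_eq_one φ).mpr fun σ hσ => ?_
  have hM : M σ = 1 := congrArg Units.val hσ
  apply Equiv.ext
  intro j
  simp only [Equiv.Perm.one_apply]
  apply u_inj
  funext a
  rw [← M_apply_u σ j a, hM]
  simp [Matrix.one_apply]

def sτ : Equiv.Perm (Fin 4) := Equiv.swap 0 2 * Equiv.swap 1 3
def sδ : Equiv.Perm (Fin 4) := Equiv.swap 0 2 * Equiv.swap 0 1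

lemma φ_sτ : φ sτ = τ₂ := by
  refine Units.ext ?_
  show M sτ = !![-1,0,0; 0,1,0; 0,0,-1]
  ext a b
  have h0 : sτ 0 = 2 := by decide
  have h1 : sτ 1 = 3 := by decide
  have h2 : sτ 2 = 0 := by decide
  have h3 : sτ 3 = 1 := by decide
  fin_cases a <;> fin_cases b <;>
    simp [M, Fin.sum_univ_four, h0, h1, h2, h3, u, Matrix.vecHead, Matrix.vecTail] <;> norm_num

lemma φ_sδ : φ sδ = δ := by
  refine Units.ext ?_
  show M sδ = !![0,1,0; 0,0,-1; -1,0,0]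
  ext a b
  have h0 : sδ 0 = 1 := by decide
  have h1 : sδ 1 = 2 := by decide
  have h2 : sδ 2 = 0 := by decide
  have h3 : sδ 3 = 3 := by decide
  fin_cases a <;> fin_cases b <;>
    simp [M, Fin.sum_univ_four, h0, h1, h2, h3, u, Matrix.vecHead, Matrix.vecTail] <;> norm_num

set_option maxHeartbeats 2000000 in
lemma closure_eq_alternating :
    Subgroup.closure ({sτ, sδ} : Set (Equiv.Perm (Fin 4))) = alternatingGroup (Fin 4) := by
  apply le_antisymm
  · rw [Subgroup.closure_le]
    rintro x (rfl | rfl) <;> exact Equiv.Perm.mem_alternatingGroup.mpr (by decide)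
  · intro x hx
    have hx' : x ∈ ({1, sτ, sδ, sτ * sδ, sδ * sτ, sδ * sδ, sτ * sδ * sτ, sτ * sδ * sδ,
        sδ * sτ * sδ, sδ * sδ * sτ, sδ * sτ * sδ * sδ, sδ * sδ * sτ * sδ} :
        Finset (Equiv.Perm (Fin 4))) := by
      have key : ∀ y : Equiv.Perm (Fin 4), Equiv.Perm.sign y = 1 →
          y ∈ ({1, sτ, sδ, sτ * sδ, sδ * sτ, sδ * sδ, sτ * sδ * sτ, sτ * sδ * sδ,
            sδ * sτ * sδ, sδ * sδ * sτ, sδ * sτ * sδ * sδ, sδ * sδ * sτ * sδ} :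
            Finset (Equiv.Perm (Fin 4))) := by decide
      exact key x (Equiv.Perm.mem_alternatingGroup.mp hx)
    have ha : sτ ∈ Subgroup.closure ({sτ, sδ} : Set (Equiv.Perm (Fin 4))) :=
      Subgroup.subset_closure (Set.mem_insert _ _)
    have hb : sδ ∈ Subgroup.closure ({sτ, sδ} : Set (Equiv.Perm (Fin 4))) :=
      Subgroup.subset_closure (Set.mem_insert_of_mem _ rfl)
    simp only [Finset.mem_insert, Finset.mem_singleton] at hx'
    rcases hx' with rfl | rfl | rfl | rfl | rfl | rfl | rfl | rfl | rfl | rfl | rfl | rfl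
    exacts [one_mem _, ha, hb, mul_mem ha hb, mul_mem hb ha, mul_mem hb hb,
      mul_mem (mul_mem ha hb) ha, mul_mem (mul_mem ha hb) hb, mul_mem (mul_mem hb ha) hb,
      mul_mem (mul_mem hb hb) ha, mul_mem (mul_mem (mul_mem hb ha) hb) hb,
      mul_mem (mul_mem (mul_mem hb hb) ha) hb]

end A4aux

/-- The subgroup of GL(3,ℝ) generated by τ₂ and δ is isomorphic to the
alternating group A₄. -/
theorem subgroup_closure_tau2_delta_iso_A4 :
    Nonempty ((Subgroup.closure {τ₂, δ} : Subgroup (GL (Fin 3) ℝ)) ≃* alternatingGroup (Fin 4)) := by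
  have himg : Subgroup.map A4aux.φ (alternatingGroup (Fin 4)) = Subgroup.closure {τ₂, δ} := by
    rw [← A4aux.closure_eq_alternating, MonoidHom.map_closure]
    congr 1
    rw [Set.image_insert_eq, Set.image_singleton, A4aux.φ_sτ, A4aux.φ_sδ]
  exact ⟨((Subgroup.equivMapOfInjective _ A4aux.φ A4aux.φ_inj).trans
    (MulEquiv.subgroupCongr himg)).symm⟩
end

section
/- The subgroup of GL(3,ℝ) generated by P = ρ·τ₂ and τ₂ equals the subgroup generated by τ₁, τ₂ and ρ, and this group is isomorphic to the dihedral group D₈ of order 8. -/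
open Matrix

/-- The matrix `P = ρ·τ₂`. -/
noncomputable def P : GL (Fin 3) ℝ := ρ * τ₂

lemma coe_τ₁ : (τ₁ : Matrix (Fin 3) (Fin 3) ℝ) = !![1,0,0; 0,-1,0; 0,0,-1] := rfl
lemma coe_τ₂ : (τ₂ : Matrix (Fin 3) (Fin 3) ℝ) = !![-1,0,0; 0,1,0; 0,0,-1] := rfl
lemma coe_ρ : (ρ : Matrix (Fin 3) (Fin 3) ℝ) = !![-1,0,0; 0,0,1; 0,1,0] := rfl

lemma coe_P : (P : Matrix (Fin 3) (Fin 3) ℝ) = !![1,0,0; 0,0,-1; 0,1,0] := by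
  show ((ρ * τ₂ : GL (Fin 3) ℝ) : Matrix (Fin 3) (Fin 3) ℝ) = _
  rw [Units.val_mul, coe_ρ, coe_τ₂]
  norm_num [Matrix.mul_fin_three]

lemma coe_P2 : ((P ^ 2 : GL (Fin 3) ℝ) : Matrix (Fin 3) (Fin 3) ℝ)
    = !![1,0,0; 0,-1,0; 0,0,-1] := by
  rw [Units.val_pow_eq_pow_val, coe_P, sq]
  norm_num [Matrix.mul_fin_three]

lemma coe_P3 : ((P ^ 3 : GL (Fin 3) ℝ) : Matrix (Fin 3) (Fin 3) ℝ)
    = !![1,0,0; 0,0,1; 0,-1,0] := by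
  have h : P ^ 3 = P ^ 2 * P := by rw [← pow_succ]
  rw [h, Units.val_mul, coe_P2, coe_P]
  norm_num [Matrix.mul_fin_three]

lemma hP4 : P ^ 4 = 1 := by
  apply Units.ext
  have h : P ^ 4 = P ^ 3 * P := by rw [← pow_succ]
  rw [h, Units.val_mul, coe_P3, coe_P, Units.val_one, Matrix.one_fin_three]
  norm_num [Matrix.mul_fin_three]

lemma hτ₂sq : τ₂ * τ₂ = 1 := by
  apply Units.ext
  rw [Units.val_mul, coe_τ₂, Units.val_one, Matrix.one_fin_three]
  norm_num [Matrix.mul_fin_three]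

lemma hP2τ₁ : P ^ 2 = τ₁ := by
  apply Units.ext
  rw [coe_P2, coe_τ₁]

lemma hPτ₂ρ : P * τ₂ = ρ := by
  show ρ * τ₂ * τ₂ = ρ
  rw [mul_assoc, hτ₂sq, mul_one]

lemma hPτ : P * τ₂ = τ₂ * P ^ 3 := by
  apply Units.ext
  rw [Units.val_mul, Units.val_mul, coe_P, coe_P3, coe_τ₂]
  norm_num [Matrix.mul_fin_three]

lemma pow_P_mod (a : ℕ) : P ^ a = P ^ (a % 4) := by
  conv_lhs => rw [← Nat.div_add_mod a 4]
  rw [pow_add, pow_mul, hP4, one_pow, one_mul]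

lemma pow_P_congr {a b : ℕ} (h : (a : ZMod 4) = (b : ZMod 4)) : P ^ a = P ^ b := by
  rw [pow_P_mod a, pow_P_mod b, (ZMod.natCast_eq_natCast_iff' a b 4).mp h]

lemma hcomm : ∀ n : ℕ, P ^ n * τ₂ = τ₂ * P ^ (3 * n) := by
  intro n
  induction n with
  | zero => simp
  | succ n ih =>
    rw [show 3 * (n + 1) = 3 * n + 3 from by ring, pow_succ, mul_assoc, hPτ, ← mul_assoc,
      ih, mul_assoc, ← pow_add]

lemma val_cast_zmod4 (i : ZMod 4) : ((i.val : ℕ) : ZMod 4) = i := by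
  simp [ZMod.natCast_val, ZMod.cast_id]

/-- The homomorphism from the dihedral group of order 8 onto ⟨P, τ₂⟩. -/
noncomputable def f : DihedralGroup 4 →* GL (Fin 3) ℝ where
  toFun x := match x with
    | DihedralGroup.r i => P ^ i.val
    | DihedralGroup.sr i => τ₂ * P ^ i.val
  map_one' := by
    show P ^ (0 : ZMod 4).val = 1
    simp [ZMod.val_zero]
  map_mul' x y := by
    rcases x with i | i <;> rcases y with j | j
    · show P ^ (i + j).val = P ^ i.val * P ^ j.val
      rw [← pow_add]
      apply pow_P_congr
      push_cast [val_cast_zmod4]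
      ring
    · show τ₂ * P ^ (j - i).val = P ^ i.val * (τ₂ * P ^ j.val)
      rw [← mul_assoc, hcomm, mul_assoc, ← pow_add]
      congr 1
      apply pow_P_congr
      push_cast [val_cast_zmod4]
      have h4 : (4 : ZMod 4) = 0 := rfl
      linear_combination (-i : ZMod 4) * h4
    · show τ₂ * P ^ (i + j).val = τ₂ * P ^ i.val * P ^ j.val
      rw [mul_assoc, ← pow_add]
      congr 1
      apply pow_P_congr
      push_cast [val_cast_zmod4]
      ring
    · show P ^ (j - i).val = τ₂ * P ^ i.val * (τ₂ * P ^ j.val)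
      rw [mul_assoc, ← mul_assoc (P ^ i.val), hcomm, ← mul_assoc, ← mul_assoc, hτ₂sq,
        one_mul, ← pow_add]
      apply pow_P_congr
      push_cast [val_cast_zmod4]
      have h4 : (4 : ZMod 4) = 0 := rfl
      linear_combination (-i : ZMod 4) * h4

lemma P_pow_row (k : ℕ) : ∀ j, ((P ^ k : GL (Fin 3) ℝ) : Matrix (Fin 3) (Fin 3) ℝ) 0 j
    = (1 : Matrix (Fin 3) (Fin 3) ℝ) 0 j := by
  induction k with
  | zero => simp
  | succ k ih =>
    intro j
    rw [pow_succ, Units.val_mul, Matrix.mul_apply, Fin.sum_univ_three, ih 0, ih 1, ih 2]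
    fin_cases j <;> simp [coe_P, Matrix.one_apply]

lemma f_injective : Function.Injective f := by
  rw [injective_iff_map_eq_one]
  intro a ha
  rcases a with i | i
  · have hi : P ^ i.val = 1 := ha
    have hval : i.val < 4 := i.val_lt
    have hzero : i.val = 0 := by
      interval_cases h : i.val
      · rfl
      · exfalso
        have hm := congrArg Units.val hi
        rw [pow_one, coe_P, Units.val_one, Matrix.one_fin_three] at hm
        have := congrArg (fun m : Matrix (Fin 3) (Fin 3) ℝ => m 1 2) hm
        norm_num [Matrix.cons_val_two, Matrix.vecHead, Matrix.vecTail] at this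
      · exfalso
        have hm := congrArg Units.val hi
        rw [Units.val_pow_eq_pow_val] at hm
        rw [← Units.val_pow_eq_pow_val, coe_P2, Units.val_one, Matrix.one_fin_three] at hm
        have := congrArg (fun m : Matrix (Fin 3) (Fin 3) ℝ => m 1 1) hm
        norm_num at this
      · exfalso
        have hm := congrArg Units.val hi
        rw [Units.val_pow_eq_pow_val] at hm
        rw [← Units.val_pow_eq_pow_val, coe_P3, Units.val_one, Matrix.one_fin_three] at hm
        have := congrArg (fun m : Matrix (Fin 3) (Fin 3) ℝ => m 1 2) hm
        norm_num [Matrix.cons_val_two, Matrix.vecHead, Matrix.vecTail] at this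
    have : i = 0 := by
      have := val_cast_zmod4 i
      rw [hzero] at this
      simpa using this.symm
    rw [this]
    rfl
  · exfalso
    have hi : τ₂ * P ^ i.val = 1 := ha
    have hQ := P_pow_row i.val 0
    simp only [Matrix.one_apply_eq] at hQ
    have hm := congrArg Units.val hi
    rw [Units.val_mul, Units.val_one, coe_τ₂] at hm
    have h00 := congrArg (fun m : Matrix (Fin 3) (Fin 3) ℝ => m 0 0) hm
    simp only [Matrix.mul_apply, Fin.sum_univ_three, Matrix.one_apply_eq] at h00
    norm_num [hQ, Matrix.cons_val_two, Matrix.vecHead, Matrix.vecTail] at h00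

lemma f_range : f.range = Subgroup.closure {P, τ₂} := by
  apply le_antisymm
  · rintro x ⟨a, rfl⟩
    have hP : P ∈ Subgroup.closure ({P, τ₂} : Set (GL (Fin 3) ℝ)) :=
      Subgroup.subset_closure (by simp)
    have hτ : τ₂ ∈ Subgroup.closure ({P, τ₂} : Set (GL (Fin 3) ℝ)) :=
      Subgroup.subset_closure (by simp)
    rcases a with i | i
    · exact pow_mem hP i.val
    · exact mul_mem hτ (pow_mem hP i.val)
  · rw [Subgroup.closure_le]
    rintro x (rfl | rfl)
    · exact ⟨DihedralGroup.r 1, by show P ^ (1 : ZMod 4).val = P; rw [show (1 : ZMod 4).val = 1 from rfl, pow_one]⟩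
    · exact ⟨DihedralGroup.sr 0, by show τ₂ * P ^ (0 : ZMod 4).val = τ₂; simp [ZMod.val_zero]⟩

/-- The subgroup generated by `P = ρ·τ₂` and τ₂ equals the subgroup generated by
τ₁, τ₂ and ρ, and this group is isomorphic to the dihedral group D₈ of order 8. -/
theorem closure_P_tau2_eq_closure_tau1_tau2_rho_iso_D8 :
    (Subgroup.closure {P, τ₂} : Subgroup (GL (Fin 3) ℝ)) = Subgroup.closure {τ₁, τ₂, ρ} ∧
    Nonempty ((Subgroup.closure {P, τ₂} : Subgroup (GL (Fin 3) ℝ)) ≃* DihedralGroup 4) := by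
  constructor
  · apply le_antisymm
    · rw [Subgroup.closure_le]
      rintro x (rfl | rfl)
      · show (ρ * τ₂ : GL (Fin 3) ℝ) ∈ _
        exact mul_mem (Subgroup.subset_closure (by simp)) (Subgroup.subset_closure (by simp))
      · exact Subgroup.subset_closure (by simp)
    · rw [Subgroup.closure_le]
      rintro x (rfl | rfl | rfl)
      · rw [← hP2τ₁]
        exact pow_mem (Subgroup.subset_closure (by simp)) 2
      · exact Subgroup.subset_closure (by simp)
      · rw [← hPτ₂ρ]
        exact mul_mem (Subgroup.subset_closure (by simp)) (Subgroup.subset_closure (by simp))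
  · exact ⟨(MulEquiv.subgroupCongr f_range.symm).trans (MonoidHom.ofInjective f_injective).symm⟩
end
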